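/- Let X be a finite subset of α with n = |X| ≥ 3 so that I = I(n) ≥ 2. Let x⁺ ∈ α with x⁺ ∉ X and let x⁻ ∈ X, and suppose x⁺ > x_(I−1) and x⁻ > x_(I−1). Set X' = (X \ {x⁻}) ∪ {x⁺}, so |X'| = n and the median index is unchanged. Then L(X') = L(X) and R(X') = ({x⁺} ∪ R(X)) \ {x⁻}. -/

import Mathlib

open Finset

/-- Median index `I(n) = ⌈n/2⌉`. -/
def medianIdx (n : ℕ) : ℕ := (n + 1) / 2

/-- 1-indexed rank of `x` in `X`: the number of elements of `X` that are `≤ x`.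
For `x ∈ X`, `rank X x = i` means `x` is the `i`-th smallest element of `X`. -/
def rank {α : Type*} [LinearOrder α] (X : Finset α) (x : α) : ℕ :=
  (X.filter (fun y => y ≤ x)).card

/-- Left part of the median partition: elements of rank `< I(|X|)`. -/
def medL {α : Type*} [LinearOrder α] (X : Finset α) : Finset α :=
  X.filter (fun x => rank X x < medianIdx X.card)

/-- Right part of the median partition: elements of rank `≥ I(|X|)`. -/
def medR {α : Type*} [LinearOrder α] (X : Finset α) : Finset α :=
  X.filter (fun x => medianIdx X.card ≤ rank X x)

lemma rank_lt_iff {α : Type*} [LinearOrder α] (X : Finset α) (a : α)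
    (hI : 0 < medianIdx X.card) (hr : rank X a = medianIdx X.card - 1)
    (x : α) (hx : x ∈ X) : rank X x < medianIdx X.card ↔ x ≤ a := by
  constructor
  · intro h
    by_contra hle
    push_neg at hle
    have hsub : insert x (X.filter (fun y => y ≤ a)) ⊆ X.filter (fun y => y ≤ x) := by
      intro z hz
      rcases mem_insert.mp hz with rfl | hz
      · exact mem_filter.mpr ⟨hx, le_refl _⟩
      · rcases mem_filter.mp hz with ⟨hz1, hz2⟩
        exact mem_filter.mpr ⟨hz1, le_trans hz2 hle.le⟩
    have hnot : x ∉ X.filter (fun y => y ≤ a) := by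
      intro hmem
      exact absurd (mem_filter.mp hmem).2 (not_le.mpr hle)
    have := card_le_card hsub
    rw [card_insert_of_notMem hnot] at this
    have : rank X a + 1 ≤ rank X x := this
    omega
  · intro h
    have hsub : X.filter (fun y => y ≤ x) ⊆ X.filter (fun y => y ≤ a) := by
      intro z hz
      rcases mem_filter.mp hz with ⟨h1, h2⟩
      exact mem_filter.mpr ⟨h1, le_trans h2 h⟩
    have := card_le_card hsub
    have : rank X x ≤ rank X a := this
    omega

theorem median_replace_both_right {α : Type*} [LinearOrder α]
    (X : Finset α) (hn : 3 ≤ X.card)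
    (xIm1 : α) (hxIm1 : xIm1 ∈ X) (hrank : rank X xIm1 = medianIdx X.card - 1)
    (xp : α) (hxp : xp ∉ X) (xm : α) (hxm : xm ∈ X)
    (hpgt : xIm1 < xp) (hmgt : xIm1 < xm)
    (X' : Finset α) (hX' : X' = (X \ {xm}) ∪ {xp}) :
    medL X' = medL X ∧ medR X' = (insert xp (medR X)) \ {xm} := by
  have hI : 0 < medianIdx X.card := by
    unfold medianIdx; omega
  -- membership characterization of X'
  have hmemX' : ∀ z, z ∈ X' ↔ (z ∈ X ∧ z ≠ xm) ∨ z = xp := by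
    intro z
    subst hX'
    simp [mem_union, mem_sdiff, mem_singleton, or_comm]
  have hcard : X'.card = X.card := by
    subst hX'
    rw [card_union_of_disjoint]
    · rw [card_sdiff_of_subset (by simpa using hxm)]
      simp
      omega
    · simp [disjoint_singleton_right, mem_sdiff]
      intro h; exact absurd h hxp
  -- filter ≤ xIm1 on X' equals that on X
  have hfilt : X'.filter (fun y => y ≤ xIm1) = X.filter (fun y => y ≤ xIm1) := by
    ext z
    simp only [mem_filter, hmemX']
    constructor
    · rintro ⟨(⟨h1, _⟩ | rfl), h2⟩
      · exact ⟨h1, h2⟩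
      · exact absurd h2 (not_le.mpr hpgt)
    · rintro ⟨h1, h2⟩
      refine ⟨Or.inl ⟨h1, ?_⟩, h2⟩
      rintro rfl
      exact absurd h2 (not_le.mpr hmgt)
  have hxIm1' : xIm1 ∈ X' := by
    rw [hmemX']
    left
    exact ⟨hxIm1, by rintro rfl; exact lt_irrefl _ hmgt⟩
  have hrank' : rank X' xIm1 = medianIdx X'.card - 1 := by
    unfold rank
    rw [hfilt, hcard]
    exact hrank
  have hI' : 0 < medianIdx X'.card := by rw [hcard]; exact hI
  have hL : ∀ (Y : Finset α), Y.card = X.card → (0 < medianIdx Y.card) →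
      xIm1 ∈ Y → rank Y xIm1 = medianIdx Y.card - 1 →
      medL Y = Y.filter (fun y => y ≤ xIm1) ∧ medR Y = Y.filter (fun y => xIm1 < y) := by
    intro Y _ hIY hmY hrY
    constructor
    · ext z
      simp only [medL, mem_filter, and_congr_right_iff]
      intro hz
      exact rank_lt_iff Y xIm1 hIY hrY z hz
    · ext z
      simp only [medR, mem_filter, and_congr_right_iff]
      intro hz
      rw [← not_lt, rank_lt_iff Y xIm1 hIY hrY z hz, not_le]
  obtain ⟨hLX, hRX⟩ := hL X rfl hI hxIm1 hrank
  obtain ⟨hLX', hRX'⟩ := hL X' hcard hI' hxIm1' hrank'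
  constructor
  · rw [hLX, hLX', hfilt]
  · rw [hRX, hRX']
    ext z
    simp only [mem_filter, hmemX', mem_sdiff, mem_insert, mem_singleton]
    constructor
    · rintro ⟨(⟨h1, h2⟩ | rfl), h3⟩
      · exact ⟨Or.inr ⟨h1, h3⟩, h2⟩
      · exact ⟨Or.inl rfl, by rintro rfl; exact hxp hxm⟩
    · rintro ⟨(rfl | ⟨h1, h2⟩), h3⟩
      · exact ⟨Or.inr rfl, hpgt⟩
      · exact ⟨Or.inl ⟨h1, h3⟩, h2⟩
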